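/- Let (c_n)_{n≥1} and (λ_n)_{n≥2} be real sequences and (γ_n)_{n≥1} a sequence of nonzero reals satisfying, for all n ≥ 2, γ_n(c_{n+1} − c_n + γ_n − γ_{n+1}) + (γ_n/γ_{n−1})·λ_n − λ_{n+1} = 0. Define c^q_n = c_n + γ_{n−1} − γ_n for n ≥ 2 and λ^q_n = (γ_{n−1}/γ_{n−2})·λ_{n−1} for n ≥ 3. Let B be the infinite tridiagonal matrix (indexed by integers ≥ 1) with entries B_{n,n} = c_n, B_{n,n+1} = 1, B_{n+1,n} = λ_{n+1}, and all other entries 0, and let M be the infinite lower bidiagonal matrix with M_{n,n} = 1, M_{n+1,n} = γ_n, and all other entries 0. Then for all i ≥ 3 and all j ≥ 1, λ^q_i·M_{i−1,j} + c^q_i·M_{i,j} + M_{i+1,j} = γ_{i−1}·B_{i−1,j} + B_{i,j}; that is, the (i,j) entry of J^{qc}·M equals the (i,j) entry of M·B, where J^{qc} is the tridiagonal matrix with diagonal entries c^q_n, superdiagonal entries 1, and subdiagonal entries λ^q_n. -/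

import Mathlib

/-- entrywise identity `(J^{qc} · M)_{i,j} = (M · B)_{i,j}` for the banded
infinite matrices associated with the quasi-Christoffel polynomials. -/
theorem quasiChristoffel_jacobiMatrix_relation
    (c lam γ : ℕ → ℝ) (B M : ℕ → ℕ → ℝ)
    (hγ : ∀ n : ℕ, 1 ≤ n → γ n ≠ 0)
    (hcond : ∀ n : ℕ, 2 ≤ n →
      γ n * (c (n + 1) - c n + γ n - γ (n + 1))
        + (γ n / γ (n - 1)) * lam n - lam (n + 1) = 0)
    (hB : ∀ i j : ℕ, 1 ≤ i → 1 ≤ j →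
      B i j = if j = i then c i else if j = i + 1 then 1 else if i = j + 1 then lam i else 0)
    (hM : ∀ i j : ℕ, 1 ≤ i → 1 ≤ j →
      M i j = if j = i then 1 else if i = j + 1 then γ j else 0)
    (cq lamq : ℕ → ℝ)
    (hcq : ∀ n : ℕ, 2 ≤ n → cq n = c n + γ (n - 1) - γ n)
    (hlamq : ∀ n : ℕ, 3 ≤ n → lamq n = (γ (n - 1) / γ (n - 2)) * lam (n - 1)) :
    ∀ i j : ℕ, 3 ≤ i → 1 ≤ j →
      lamq i * M (i - 1) j + cq i * M i j + M (i + 1) j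
        = γ (i - 1) * B (i - 1) j + B i j := by
  intro i j hi hj
  obtain ⟨k, rfl⟩ : ∃ k, i = k + 3 := ⟨i - 3, by omega⟩
  have h1 : k + 3 - 1 = k + 2 := rfl
  have h2 : k + 3 - 2 = k + 1 := rfl
  have hcnd := hcond (k + 2) (by omega)
  have hg1 := hγ (k + 1) (by omega)
  have hg2 := hγ (k + 2) (by omega)
  simp only [show k + 2 - 1 = k + 1 from rfl] at hcnd
  rw [h1, hM (k + 2) j (by omega) hj, hM (k + 3) j (by omega) hj,
      hM (k + 4) j (by omega) hj, hB (k + 2) j (by omega) hj,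
      hB (k + 3) j (by omega) hj, hcq (k + 3) (by omega), hlamq (k + 3) (by omega), h1, h2]
  rcases eq_or_ne j (k + 1) with rfl | e1
  · split_ifs <;> try omega
    field_simp
    ring
  rcases eq_or_ne j (k + 2) with rfl | e2
  · split_ifs <;> try omega
    field_simp at hcnd ⊢
    linarith [hcnd]
  rcases eq_or_ne j (k + 3) with rfl | e3
  · split_ifs <;> try omega
    ring
  rcases eq_or_ne j (k + 4) with rfl | e4
  · split_ifs <;> try omega
    norm_num
  split_ifs <;> try omega
  all_goals norm_num
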